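/- For complete graphs with m, n ≥ 3, the Grundy domination number of the Cartesian product satisfies γ_gr(K_n □ K_m) ≥ n + m − 2. -/

import Mathlib

open SimpleGraph

/-- The closed neighborhood of a vertex. -/
def closedNbhd {V : Type*} (G : SimpleGraph V) (v : V) : Set V :=
  insert v (G.neighborSet v)

/-- A legal (closed neighborhood) sequence: distinct vertices, each dominating
a vertex not dominated by its predecessors. -/
def IsLegalSeq {V : Type*} (G : SimpleGraph V) (l : List V) : Prop :=
  l.Nodup ∧ ∀ i : Fin l.length, ∃ u, u ∈ closedNbhd G (l.get i) ∧
    ∀ j : Fin l.length, (j : ℕ) < (i : ℕ) → u ∉ closedNbhd G (l.get j)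

/-- A dominating sequence: a legal sequence whose vertex set dominates the graph. -/
def IsDomSeq {V : Type*} (G : SimpleGraph V) (l : List V) : Prop :=
  IsLegalSeq G l ∧ ∀ v : V, ∃ u ∈ l, v ∈ closedNbhd G u

/-- The Grundy domination number: maximum length of a dominating sequence. -/
noncomputable def grundyDomNum {V : Type*} (G : SimpleGraph V) : ℕ :=
  sSup {n | ∃ l : List V, IsDomSeq G l ∧ l.length = n}

/-- A legal open neighborhood sequence. -/
def IsLegalOpenSeq {V : Type*} (G : SimpleGraph V) (l : List V) : Prop :=
  l.Nodup ∧ ∀ i : Fin l.length, ∃ u, u ∈ G.neighborSet (l.get i) ∧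
    ∀ j : Fin l.length, (j : ℕ) < (i : ℕ) → u ∉ G.neighborSet (l.get j)

/-- A total dominating sequence. -/
def IsTotalDomSeq {V : Type*} (G : SimpleGraph V) (l : List V) : Prop :=
  IsLegalOpenSeq G l ∧ ∀ v : V, ∃ u ∈ l, v ∈ G.neighborSet u

/-- The Grundy total domination number. -/
noncomputable def grundyTotalDomNum {V : Type*} (G : SimpleGraph V) : ℕ :=
  sSup {n | ∃ l : List V, IsTotalDomSeq G l ∧ l.length = n}

/-- The edge clique cover number: minimum size of a family of cliques covering all edges. -/
noncomputable def edgeCliqueCoverNum {V : Type*} (G : SimpleGraph V) : ℕ :=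
  sInf {n | ∃ C : Finset (Set V), C.card = n ∧ (∀ Q ∈ C, G.IsClique Q) ∧
    ∀ u v : V, G.Adj u v → ∃ Q ∈ C, u ∈ Q ∧ v ∈ Q}

/-- The independence number. -/
noncomputable def indepNum {V : Type*} (G : SimpleGraph V) : ℕ :=
  sSup {n | ∃ s : Finset V, (s : Set V).Pairwise (fun u v => ¬ G.Adj u v) ∧ s.card = n}

/-- The lexicographic product of simple graphs. -/
def lexProd {V W : Type*} (G : SimpleGraph V) (H : SimpleGraph W) : SimpleGraph (V × W) where
  Adj x y := G.Adj x.1 y.1 ∨ (x.1 = y.1 ∧ H.Adj x.2 y.2)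
  symm := by
    constructor
    rintro x y (h | ⟨e, h⟩)
    · exact Or.inl h.symm
    · exact Or.inr ⟨e.symm, h.symm⟩
  loopless := by
    constructor
    rintro x (h | ⟨_, h⟩)
    · exact G.loopless.irrefl _ h
    · exact H.loopless.irrefl _ h

/-- The strong product of simple graphs. -/
def strongProd {V W : Type*} (G : SimpleGraph V) (H : SimpleGraph W) : SimpleGraph (V × W) where
  Adj x y := x ≠ y ∧ (x.1 = y.1 ∨ G.Adj x.1 y.1) ∧ (x.2 = y.2 ∨ H.Adj x.2 y.2)
  symm := by
    constructor
    rintro x y ⟨hne, h1, h2⟩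
    refine ⟨hne.symm, ?_, ?_⟩
    · rcases h1 with h | h
      · exact Or.inl h.symm
      · exact Or.inr h.symm
    · rcases h2 with h | h
      · exact Or.inl h.symm
      · exact Or.inr h.symm
  loopless := ⟨fun x h => h.1 rfl⟩

/-- The direct (tensor) product of simple graphs. -/
def directProd {V W : Type*} (G : SimpleGraph V) (H : SimpleGraph W) : SimpleGraph (V × W) where
  Adj x y := G.Adj x.1 y.1 ∧ H.Adj x.2 y.2
  symm := ⟨fun _ _ h => ⟨h.1.symm, h.2.symm⟩⟩
  loopless := ⟨fun x h => G.loopless.irrefl _ h.1⟩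

/-- The boundary of a set of vertices. -/
def boundarySet {V : Type*} (G : SimpleGraph V) (S : Set V) : Set V :=
  {u | u ∉ S ∧ ∃ s ∈ S, G.Adj u s}

/-- `aVal G l` is the number of entries of `l` not adjacent to any earlier entry. -/
def aVal {V : Type*} (G : SimpleGraph V) [DecidableRel G.Adj] (l : List V) : ℕ :=
  (Finset.univ.filter (fun i : Fin l.length =>
    ∀ j : Fin l.length, (j : ℕ) < (i : ℕ) → ¬ G.Adj (l.get j) (l.get i))).card

lemma mem_closedNbhd_box {n m : ℕ} (u v : Fin n × Fin m) :
    u ∈ closedNbhd ((⊤ : SimpleGraph (Fin n)) □ (⊤ : SimpleGraph (Fin m))) v ↔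
      u.1 = v.1 ∨ u.2 = v.2 := by
  simp only [closedNbhd, Set.mem_insert_iff, SimpleGraph.mem_neighborSet,
    SimpleGraph.boxProd_adj, top_adj, Prod.ext_iff]
  constructor
  · rintro (⟨h1, h2⟩ | ⟨⟨h, h2⟩ | ⟨h, h1⟩⟩)
    · exact Or.inl h1
    · exact Or.inr h2.symm
    · exact Or.inl h1.symm
  · rintro (h | h)
    · by_cases h2 : u.2 = v.2
      · exact Or.inl ⟨h, h2⟩
      · exact Or.inr (Or.inr ⟨fun e => h2 e.symm, h.symm⟩)
    · by_cases h1 : u.1 = v.1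
      · exact Or.inl ⟨h1, h⟩
      · exact Or.inr (Or.inl ⟨fun e => h1 e.symm, h.symm⟩)

theorem stmt_2 (n m : ℕ) (hn : 3 ≤ n) (hm : 3 ≤ m) :
    grundyDomNum ((⊤ : SimpleGraph (Fin n)) □ (⊤ : SimpleGraph (Fin m))) ≥ n + m - 2 := by
  set G := ((⊤ : SimpleGraph (Fin n)) □ (⊤ : SimpleGraph (Fin m))) with hG
  set f : Fin (n + m - 2) → Fin n × Fin m := fun k =>
    if h : (k : ℕ) < n - 1 then (⟨k, by omega⟩, ⟨0, by omega⟩)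
    else (⟨0, by omega⟩, ⟨(k : ℕ) - (n - 1) + 1, by have := k.isLt; omega⟩) with hf
  set l : List (Fin n × Fin m) := List.ofFn f with hl
  have hlen : l.length = n + m - 2 := List.length_ofFn (f := f)
  have hget : ∀ i : Fin l.length, l.get i = f ⟨(i : ℕ), by have := i.isLt; omega⟩ := by
    intro i
    rw [List.get_ofFn]
    congr 1
  have hdom : IsDomSeq G l := by
    refine ⟨⟨?_, ?_⟩, ?_⟩
    · rw [hl, List.nodup_ofFn]
      intro a b hab
      by_cases ha : (a : ℕ) < n - 1 <;> by_cases hb : (b : ℕ) < n - 1 <;>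
        simp only [hf, ha, hb, dif_pos, dif_neg, not_false_iff, Prod.ext_iff,
          Fin.ext_iff, Fin.val_zero] at hab ⊢ <;> omega
    · intro i
      by_cases hi : (i : ℕ) < n - 1
      · refine ⟨(⟨(i : ℕ), by omega⟩, ⟨1, by omega⟩), ?_, ?_⟩
        · rw [mem_closedNbhd_box, hget]
          simp only [hf, dif_pos hi]
          exact Or.inl trivial
        · intro j hj
          rw [mem_closedNbhd_box, hget]
          have hj' : (j : ℕ) < n - 1 := by omega
          simp only [hf, dif_pos hj', Prod.fst, Prod.snd, Fin.ext_iff, Fin.val_zero]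
          push_neg
          exact ⟨by omega, by omega⟩
      · have hiN : (i : ℕ) < n + m - 2 := by have := i.isLt; omega
        refine ⟨(⟨n - 1, by omega⟩, ⟨(i : ℕ) - (n - 1) + 1, by omega⟩), ?_, ?_⟩
        · rw [mem_closedNbhd_box, hget]
          simp only [hf, dif_neg hi]
          right
          trivial
        · intro j hj
          rw [mem_closedNbhd_box, hget]
          by_cases hj' : (j : ℕ) < n - 1 <;>
            simp only [hf, dif_pos, dif_neg, hj', not_false_iff, Prod.fst, Prod.snd,
              Fin.ext_iff, Fin.val_zero] <;> push_neg <;> exact ⟨by omega, by omega⟩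
    · rintro ⟨a, b⟩
      by_cases hb : (b : ℕ) = 0
      · refine ⟨f ⟨0, by omega⟩, ?_, ?_⟩
        · rw [hl, List.mem_ofFn]; exact ⟨_, rfl⟩
        · rw [mem_closedNbhd_box]
          right
          simp only [hf, dif_pos (show (0 : ℕ) < n - 1 by omega)]
          exact Fin.ext hb
      · refine ⟨f ⟨n - 1 + ((b : ℕ) - 1), by have := b.isLt; omega⟩, ?_, ?_⟩
        · rw [hl, List.mem_ofFn]; exact ⟨_, rfl⟩
        · rw [mem_closedNbhd_box]
          right
          have : ¬ ((n - 1 + ((b : ℕ) - 1)) < n - 1) := by omega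
          simp only [hf, dif_neg this]
          exact Fin.ext (by simp; omega)
  have hmem : (n + m - 2) ∈ {k | ∃ l' : List (Fin n × Fin m), IsDomSeq G l' ∧ l'.length = k} :=
    ⟨l, hdom, hlen⟩
  have hbdd : BddAbove {k | ∃ l' : List (Fin n × Fin m), IsDomSeq G l' ∧ l'.length = k} := by
    refine ⟨Fintype.card (Fin n × Fin m), ?_⟩
    rintro k ⟨l', hl', rfl⟩
    exact hl'.1.1.length_le_card
  exact le_csSup hbdd hmem
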